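/- Let Φ and h be as in the canonical construction. For every index j ∈ [t], the variable v(j) is never the head of an implicate of h; moreover, every prime implicate of h whose variable set contains v(j) is quadratic, i.e., has exactly two literals (it has the form v(j) → z for some variable z of h other than v(j)). -/
import Mathlib


open Finset

/-- A clause, given by its (fin)sets of positive and negative variables. -/
structure Clause (V : Type*) where
  pos : Finset V
  neg : Finset V
deriving DecidableEq

namespace Clause

variable {V : Type*}

/-- A genuine clause: no variable occurs both positively and negatively. -/
def IsClause (C : Clause V) : Prop := Disjoint C.pos C.neg

/-- Evaluation of a clause (as a disjunction of literals) under an assignment. -/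
def eval (C : Clause V) (a : V → Bool) : Prop :=
  (∃ v ∈ C.pos, a v = true) ∨ (∃ v ∈ C.neg, a v = false)

/-- A pure (definite) Horn clause: exactly one positive literal, its head. -/
def IsPureHorn (C : Clause V) : Prop := ∃ v, C.pos = {v}

end Clause

variable {V : Type*}

/-- Conjunction (as a predicate on assignments) of a set of clauses. -/
def evalSet (S : Set (Clause V)) (a : V → Bool) : Prop := ∀ C ∈ S, C.eval a

/-- Conjunction of the clauses of a CNF, i.e. of a finite set of clauses. -/
def evalCNF (Φ : Finset (Clause V)) (a : V → Bool) : Prop := ∀ C ∈ Φ, C.eval a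

/-- A CNF represents a Boolean function `h`. -/
def Represents (Φ : Finset (Clause V)) (h : (V → Bool) → Prop) : Prop :=
  ∀ a, evalCNF Φ a ↔ h a

/-- A pure Horn CNF: all clauses are pure Horn. -/
def IsPureHornCNF (Φ : Finset (Clause V)) : Prop :=
  ∀ C ∈ Φ, C.IsClause ∧ C.IsPureHorn

/-- The forward chaining closure of a set `Q` of variables with respect to the
pure Horn CNF `Φ`: the smallest set containing `Q` such that whenever `Φ` contains
a clause `S → v` with `S` inside the set, also `v` belongs to it. -/
def fcClosure (Φ : Finset (Clause V)) (Q : Set V) : Set V :=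
  ⋂₀ {T : Set V | Q ⊆ T ∧ ∀ C ∈ Φ, ∀ v : V, C.pos = {v} → ↑C.neg ⊆ T → v ∈ T}

/-- `C` is an implicate of `h`: every assignment falsifying `C` falsifies `h`. -/
def Implicate (h : (V → Bool) → Prop) (C : Clause V) : Prop :=
  ∀ a, ¬ C.eval a → ¬ h a

/-- `C` is a prime implicate of `h`: an implicate from which no literal can be
deleted while remaining an implicate. -/
def PrimeImplicate [DecidableEq V] (h : (V → Bool) → Prop) (C : Clause V) : Prop :=
  C.IsClause ∧ Implicate h C ∧
  (∀ v ∈ C.pos, ¬ Implicate h ⟨C.pos.erase v, C.neg⟩) ∧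
  (∀ v ∈ C.neg, ¬ Implicate h ⟨C.pos, C.neg.erase v⟩)

/-- `C₁` and `C₂` are resolvable on `v`: `v` occurs positively in `C₁`, negatively in
`C₂`, and no other variable occurs with opposite signs in them. -/
def Resolvable (C₁ C₂ : Clause V) (v : V) : Prop :=
  v ∈ C₁.pos ∧ v ∈ C₂.neg ∧
  ∀ w, w ≠ v → ¬(w ∈ C₁.pos ∧ w ∈ C₂.neg) ∧ ¬(w ∈ C₁.neg ∧ w ∈ C₂.pos)

/-- The resolvent `R(C₁,C₂) = (C₁ \ {v}) ∪ (C₂ \ {v̄})`. -/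
def resolventOf [DecidableEq V] (C₁ C₂ : Clause V) (v : V) : Clause V :=
  ⟨C₁.pos.erase v ∪ C₂.pos, C₁.neg ∪ C₂.neg.erase v⟩

/-- A set of clauses closed under resolution. -/
def ResClosed [DecidableEq V] (S : Set (Clause V)) : Prop :=
  ∀ C₁ ∈ S, ∀ C₂ ∈ S, ∀ v, Resolvable C₁ C₂ v → resolventOf C₁ C₂ v ∈ S

/-- The resolution closure of a set of clauses. -/
def resClosure [DecidableEq V] (S : Set (Clause V)) : Set (Clause V) :=
  ⋂₀ {T : Set (Clause V) | S ⊆ T ∧ ResClosed T}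

/-- `I(h)`: the resolution closure of the set of prime implicates of `h`. -/
def implSet [DecidableEq V] (h : (V → Bool) → Prop) : Set (Clause V) :=
  resClosure {C | PrimeImplicate h C}

/-- An exclusive set of clauses of `h`. -/
def ExclusiveSet [DecidableEq V] (h : (V → Bool) → Prop) (Xs : Set (Clause V)) : Prop :=
  Xs ⊆ implSet h ∧
  ∀ C₁ ∈ implSet h, ∀ C₂ ∈ implSet h, ∀ v, Resolvable C₁ C₂ v →
    resolventOf C₁ C₂ v ∈ Xs → C₁ ∈ Xs ∧ C₂ ∈ Xs

/-- The set of variables occurring in a CNF. -/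
def varsOf [DecidableEq V] (Φ : Finset (Clause V)) : Finset V :=
  Φ.biUnion fun C => C.pos ∪ C.neg


/-- A Label Cover instance: a bipartite graph with parts `X` and `Y` and edge set `E`,
label sets `A` (for `X`-vertices) and `B` (for `Y`-vertices), and a nonempty
constraint relation `cst e ⊆ A × B` for every edge `e ∈ E`. -/
structure LabelCover (X Y A B : Type*) where
  E : Finset (X × Y)
  cst : X × Y → Finset (A × B)
  cst_nonempty : ∀ e ∈ E, (cst e).Nonempty

namespace LabelCover

variable {X Y A B : Type*}

/-- A labeling `(f, g)` covers an edge `(x,y)` if for every label `b ∈ g y` there is a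
label `a ∈ f x` with `(a, b)` admissible for the edge. -/
def Covers (I : LabelCover X Y A B) (f : X → Finset A) (g : Y → Finset B)
    (e : X × Y) : Prop :=
  ∀ b ∈ g e.2, ∃ a ∈ f e.1, (a, b) ∈ I.cst e

/-- A total-cover: a labeling (assigning a nonempty label set to every `Y`-vertex)
covering every edge. -/
def IsTotalCover (I : LabelCover X Y A B) (f : X → Finset A) (g : Y → Finset B) : Prop :=
  (∀ y, (g y).Nonempty) ∧ ∀ e ∈ I.E, I.Covers f g e

/-- A total-cover is tight if every `Y`-vertex receives exactly one label. -/
def Tight (g : Y → Finset B) : Prop := ∀ y, (g y).card = 1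

end LabelCover

/-- The cost of a labeling: the average number of labels assigned to `X`-vertices. -/
def lcCost {X A : Type*} [Fintype X] (f : X → Finset A) : ℚ :=
  (∑ x, ((f x).card : ℚ)) / (Fintype.card X : ℚ)


/-- The labels of the refined Label Cover instance: `L ∪ L′`, where `L = ⋃_x L_x`
with `L_x = {x} × A` and `L′ = ⋃_y L′_y` with `L′_y = {y} × B`. -/
abbrev Lab (X Y A B : Type*) := (X × A) ⊕ (Y × B)

/-- The propositional variables of the canonical pure Horn CNF construction:
`u ℓ` for labels `ℓ ∈ L ∪ L′`, `e x y i` and `el x y ℓ′ i` for edges `(x,y)`,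
labels `ℓ′ ∈ L′_y` and indices `i ∈ [d]`, and `v j` for `j ∈ [t]`. -/
inductive PV (X Y A B : Type*) where
  | u : Lab X Y A B → PV X Y A B
  | e : X → Y → ℕ → PV X Y A B
  | el : X → Y → B → ℕ → PV X Y A B
  | v : ℕ → PV X Y A B
deriving DecidableEq

section Canonical

variable {X Y A B : Type*} [Fintype X] [Fintype Y] [Fintype A] [Fintype B]
  [DecidableEq X] [DecidableEq Y] [DecidableEq A] [DecidableEq B]

/-- The (open) neighborhood `N(y) = {z ∈ X : (z,y) ∈ E}`. -/
def Nbr (I : LabelCover X Y A B) (y : Y) : Finset X :=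
  Finset.univ.filter fun z => (z, y) ∈ I.E

/-- Clauses (a): `u(ℓ) ∧ u(ℓ′) → e(x,y,ℓ′,i)` for `(x,y) ∈ E`, `(ℓ,ℓ′) ∈ Π_{(x,y)}`,
`i ∈ [d]`. -/
def clA (I : LabelCover X Y A B) (d : ℕ) : Finset (Clause (PV X Y A B)) :=
  (I.E ×ˢ Finset.Icc 1 d).biUnion fun p =>
    (I.cst p.1).image fun ab =>
      ⟨{PV.el p.1.1 p.1.2 ab.2 p.2},
       {PV.u (Sum.inl (p.1.1, ab.1)), PV.u (Sum.inr (p.1.2, ab.2))}⟩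

/-- Clauses (b): `⋀_{z ∈ N(y)} e(z,y,ℓ′,i) → e(x,y,i)` for `(x,y) ∈ E`, `ℓ′ ∈ L′_y`,
`i ∈ [d]`. -/
def clB (I : LabelCover X Y A B) (d : ℕ) : Finset (Clause (PV X Y A B)) :=
  ((I.E ×ˢ (Finset.univ : Finset B)) ×ˢ Finset.Icc 1 d).image fun p =>
    ⟨{PV.e p.1.1.1 p.1.1.2 p.2},
     (Nbr I p.1.1.2).image fun z => PV.el z p.1.1.2 p.1.2 p.2⟩

/-- Clauses (c): `e(x,y,i) → e(x,y,ℓ′,i)` for `(x,y) ∈ E`, `ℓ′ ∈ L′_y`, `i ∈ [d]`. -/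
def clC (I : LabelCover X Y A B) (d : ℕ) : Finset (Clause (PV X Y A B)) :=
  ((I.E ×ˢ (Finset.univ : Finset B)) ×ˢ Finset.Icc 1 d).image fun p =>
    ⟨{PV.el p.1.1.1 p.1.1.2 p.1.2 p.2}, {PV.e p.1.1.1 p.1.1.2 p.2}⟩

/-- The common body of the clauses (d): all variables `e(x,y,i)`, `(x,y) ∈ E`, `i ∈ [d]`. -/
def bigBody (I : LabelCover X Y A B) (d : ℕ) : Finset (PV X Y A B) :=
  (I.E ×ˢ Finset.Icc 1 d).image fun p => PV.e p.1.1 p.1.2 p.2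

/-- Clauses (d): `⋀_{i ∈ [d]} ⋀_{(x,y) ∈ E} e(x,y,i) → u(ℓ)` for `ℓ ∈ L ∪ L′`. -/
def clD (I : LabelCover X Y A B) (d : ℕ) : Finset (Clause (PV X Y A B)) :=
  (Finset.univ : Finset (Lab X Y A B)).image fun ℓ => ⟨{PV.u ℓ}, bigBody I d⟩

/-- Clauses (e): `v(j) → u(ℓ)` for `j ∈ [t]`, `ℓ ∈ L ∪ L′`. -/
def clE (X Y A B : Type*) [Fintype X] [Fintype Y] [Fintype A] [Fintype B]
    [DecidableEq X] [DecidableEq Y] [DecidableEq A] [DecidableEq B]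
    (t : ℕ) : Finset (Clause (PV X Y A B)) :=
  (Finset.Icc 1 t ×ˢ (Finset.univ : Finset (Lab X Y A B))).image fun p =>
    ⟨{PV.u p.2}, {PV.v p.1}⟩

/-- The canonical formula `Ψ`: clauses of types (a)–(d). -/
def PsiCNF (I : LabelCover X Y A B) (d : ℕ) : Finset (Clause (PV X Y A B)) :=
  clA I d ∪ clB I d ∪ clC I d ∪ clD I d

/-- The canonical formula `Φ`: clauses of types (a)–(e). -/
def PhiCNF (I : LabelCover X Y A B) (d t : ℕ) : Finset (Clause (PV X Y A B)) :=
  PsiCNF I d ∪ clE X Y A B t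

/-- The pure Horn function `h` represented by the canonical formula `Φ`. -/
def hFun (I : LabelCover X Y A B) (d t : ℕ) : (PV X Y A B → Bool) → Prop :=
  fun a => evalCNF (PhiCNF I d t) a

/-- The pure Horn function `g` represented by the canonical formula `Ψ`. -/
def gFun (I : LabelCover X Y A B) (d : ℕ) : (PV X Y A B → Bool) → Prop :=
  fun a => evalCNF (PsiCNF I d) a

end Canonical


-- auxiliary lemmas
lemma fc_subset (Φ : Finset (Clause V)) (Q : Set V) : Q ⊆ fcClosure Φ Q :=
  fun _ hw => Set.mem_sInter.2 fun _ hT => hT.1 hw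

lemma fc_min (Φ : Finset (Clause V)) (Q T : Set V) (hQ : Q ⊆ T)
    (hT : ∀ C ∈ Φ, ∀ v : V, C.pos = {v} → ↑C.neg ⊆ T → v ∈ T) :
    fcClosure Φ Q ⊆ T := fun _ hw => Set.mem_sInter.1 hw T ⟨hQ, hT⟩

lemma fc_closed (Φ : Finset (Clause V)) (Q : Set V) :
    ∀ C ∈ Φ, ∀ v : V, C.pos = {v} → ↑C.neg ⊆ fcClosure Φ Q → v ∈ fcClosure Φ Q := by
  intro C hC v hv hneg
  refine Set.mem_sInter.2 fun T hT => hT.2 C hC v hv (hneg.trans ?_)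
  exact fun w hw => Set.mem_sInter.1 hw T hT

lemma fc_mono (Φ : Finset (Clause V)) {Q Q' : Set V} (h : Q ⊆ Q') :
    fcClosure Φ Q ⊆ fcClosure Φ Q' :=
  fc_min Φ Q _ (h.trans (fc_subset Φ Q')) (fc_closed Φ Q')

lemma implicate_of_mem (Φ : Finset (Clause V)) (S : Finset V) (z : V)
    (hz : z ∈ fcClosure Φ ↑S) : Implicate (fun a => evalCNF Φ a) ⟨{z}, S⟩ := by
  intro a hna hha
  simp only [Clause.eval, not_or, not_exists, not_and] at hna
  obtain ⟨h1, h2⟩ := hna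
  have hzf : a z = false := by
    have := h1 z (Finset.mem_singleton_self z); simpa using this
  have hT : fcClosure Φ ↑S ⊆ {w | a w = true} := by
    refine fc_min Φ _ _ ?_ ?_
    · intro w hw
      have := h2 w (by exact_mod_cast hw)
      simpa using this
    · intro C hC v hv hneg
      rcases hha C hC with ⟨w, hwp, hwt⟩ | ⟨w, hwn, hwf⟩
      · rw [hv, Finset.mem_singleton] at hwp; subst hwp; exact hwt
      · exact absurd (hneg hwn) (by simp [hwf])
  have := hT hz
  simp [hzf] at this

open Classical in
lemma mem_of_implicate (Φ : Finset (Clause V)) (S : Finset V) (z : V)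
    (hPH : ∀ C ∈ Φ, ∃ v, C.pos = {v})
    (h : Implicate (fun a => evalCNF Φ a) ⟨{z}, S⟩) : z ∈ fcClosure Φ ↑S := by
  by_contra hz
  set a : V → Bool := fun w => if w ∈ fcClosure Φ ↑S then true else false with ha
  refine h a ?_ ?_
  · simp only [Clause.eval, not_or, not_exists, not_and]
    constructor
    · intro w hw
      rw [Finset.mem_singleton] at hw; subst hw
      simp [ha, hz]
    · intro w hw
      simp [ha, fc_subset Φ (↑S) (by exact_mod_cast hw : w ∈ (↑S : Set V))]
  · intro C hC
    obtain ⟨v, hv⟩ := hPH C hC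
    by_cases hneg : (↑C.neg : Set V) ⊆ fcClosure Φ ↑S
    · left
      exact ⟨v, by simp [hv], by simp [ha, fc_closed Φ (↑S) C hC v hv hneg]⟩
    · right
      rw [Set.not_subset] at hneg
      obtain ⟨w, hw1, hw2⟩ := hneg
      exact ⟨w, by exact_mod_cast hw1, by simp [ha, hw2]⟩

lemma mem_closure_cases (Φ : Finset (Clause V)) (Q : Set V) (z : V)
    (hz : z ∈ fcClosure Φ Q) : z ∈ Q ∨ ∃ C ∈ Φ, z ∈ C.pos := by
  by_contra h
  push_neg at h
  obtain ⟨h1, h2⟩ := h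
  have : z ∈ {w : V | w ≠ z} := by
    refine fc_min Φ Q _ ?_ ?_ hz
    · intro w hw
      simp only [Set.mem_setOf_eq]
      rintro rfl; exact h1 hw
    · intro C hC v hv _
      simp only [Set.mem_setOf_eq]
      rintro rfl
      exact h2 C hC (by simp [hv])
  simp at this

lemma evalCNF_min (Φ : Finset (Clause V)) (hPH : ∀ C ∈ Φ, ∃ v, C.pos = {v})
    {a b : V → Bool} (ha : evalCNF Φ a) (hb : evalCNF Φ b) :
    evalCNF Φ (fun w => a w && b w) := by
  intro C hC
  obtain ⟨v, hv⟩ := hPH C hC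
  by_cases hneg : ∃ w ∈ C.neg, (a w && b w) = false
  · exact Or.inr hneg
  · push_neg at hneg
    left
    refine ⟨v, by simp [hv], ?_⟩
    have hav : a v = true := by
      rcases ha C hC with ⟨w, hwp, hwt⟩ | ⟨w, hwn, hwf⟩
      · rw [hv, Finset.mem_singleton] at hwp; subst hwp; exact hwt
      · exact absurd (hneg w hwn) (by simp [hwf])
    have hbv : b v = true := by
      rcases hb C hC with ⟨w, hwp, hwt⟩ | ⟨w, hwn, hwf⟩
      · rw [hv, Finset.mem_singleton] at hwp; subst hwp; exact hwt
      · exact absurd (hneg w hwn) (by simp [hwf])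
    simp [hav, hbv]

lemma prime_pos_singleton [DecidableEq V] (Φ : Finset (Clause V))
    (hPH : ∀ C ∈ Φ, ∃ v, C.pos = {v}) (C : Clause V)
    (hC : PrimeImplicate (fun a => evalCNF Φ a) C) : ∃ z, C.pos = {z} := by
  obtain ⟨hcl, himp, hposmin, hnegmin⟩ := hC
  have hall : evalCNF Φ (fun _ => true) := by
    intro D hD
    obtain ⟨v, hv⟩ := hPH D hD
    exact Or.inl ⟨v, by simp [hv], rfl⟩
  -- pos nonempty
  obtain ⟨p, hp⟩ : C.pos.Nonempty := by
    rw [Finset.nonempty_iff_ne_empty]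
    intro hemp
    refine himp (fun _ => true) ?_ hall
    simp [Clause.eval, hemp]
  refine ⟨p, Finset.eq_singleton_iff_unique_mem.2 ⟨hp, ?_⟩⟩
  by_contra hq
  push_neg at hq
  obtain ⟨q, hqmem, hqne⟩ := hq
  have key : ∀ r ∈ C.pos, ∃ a : V → Bool, (∀ w ∈ C.pos, w ≠ r → a w = false) ∧
      (∀ w ∈ C.neg, a w = true) ∧ a r = true ∧ evalCNF Φ a := by
    intro r hr
    have := hposmin r hr
    rw [Implicate] at this
    push_neg at this
    obtain ⟨a, hna, hha⟩ := this
    simp only [Clause.eval, not_or, not_exists, not_and] at hna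
    obtain ⟨h1, h2⟩ := hna
    have hposf : ∀ w ∈ C.pos, w ≠ r → a w = false := by
      intro w hw hwr
      have := h1 w (Finset.mem_erase.2 ⟨hwr, hw⟩); simpa using this
    have hnegt : ∀ w ∈ C.neg, a w = true := by
      intro w hw; have := h2 w hw; simpa using this
    have har : a r = true := by
      have hev : C.eval a := by
        by_contra h; exact himp a h hha
      rcases hev with ⟨w, hwp, hwt⟩ | ⟨w, hwn, hwf⟩
      · by_cases hwr : w = r
        · subst hwr; exact hwt
        · exact absurd hwt (by simp [hposf w hwp hwr])
      · exact absurd (hnegt w hwn) (by simp [hwf])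
    exact ⟨a, hposf, hnegt, har, hha⟩
  obtain ⟨a, hapos, haneg, hap, haCNF⟩ := key p hp
  obtain ⟨b, hbpos, hbneg, hbq, hbCNF⟩ := key q hqmem
  refine himp (fun w => a w && b w) ?_ (evalCNF_min Φ hPH haCNF hbCNF)
  simp only [Clause.eval, not_or, not_exists, not_and]
  constructor
  · intro w hw
    by_cases hwp : w = p
    · rw [hwp]
      simp [hbpos p hp fun h => hqne h.symm]
    · simp [hapos w hw hwp]
  · intro w hw
    simp [haneg w hw, hbneg w hw]

section CanonAux
variable {X Y A B : Type*} [Fintype X] [Fintype Y] [Fintype A] [Fintype B]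
  [DecidableEq X] [DecidableEq Y] [DecidableEq A] [DecidableEq B]

lemma phi_pos (I : LabelCover X Y A B) (d t : ℕ) :
    ∀ C ∈ PhiCNF I d t, ∃ w, C.pos = {w} ∧ ∀ j, w ≠ PV.v j := by
  intro C hC
  simp only [PhiCNF, PsiCNF, Finset.mem_union] at hC
  rcases hC with ((((hC | hC) | hC) | hC) | hC)
  · simp only [clA, Finset.mem_biUnion, Finset.mem_image] at hC
    obtain ⟨p, _, ab, _, rfl⟩ := hC
    exact ⟨_, rfl, fun j h => by simp at h⟩
  · simp only [clB, Finset.mem_image] at hC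
    obtain ⟨p, _, rfl⟩ := hC
    exact ⟨_, rfl, fun j h => by simp at h⟩
  · simp only [clC, Finset.mem_image] at hC
    obtain ⟨p, _, rfl⟩ := hC
    exact ⟨_, rfl, fun j h => by simp at h⟩
  · simp only [clD, Finset.mem_image] at hC
    obtain ⟨ℓ, _, rfl⟩ := hC
    exact ⟨_, rfl, fun j h => by simp at h⟩
  · simp only [clE, Finset.mem_image] at hC
    obtain ⟨p, _, rfl⟩ := hC
    exact ⟨_, rfl, fun j h => by simp at h⟩

lemma head_mem_closure (I : LabelCover X Y A B) (d t : ℕ)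
    (hfeas : ∃ f g, I.IsTotalCover f g) {j : ℕ} (hj : j ∈ Finset.Icc 1 t) :
    ∀ C ∈ PhiCNF I d t, ∀ z ∈ C.pos, z ∈ fcClosure (PhiCNF I d t) {PV.v j} := by
  obtain ⟨f, g, hg, hcov⟩ := hfeas
  set Φ := PhiCNF I d t with hΦ
  set cl := fcClosure Φ {PV.v j} with hcl
  have hvj : (PV.v j : PV X Y A B) ∈ cl := fc_subset _ _ rfl
  have hu : ∀ ℓ : Lab X Y A B, PV.u ℓ ∈ cl := by
    intro ℓ
    refine fc_closed Φ _ ⟨{PV.u ℓ}, {PV.v j}⟩ ?_ (PV.u ℓ) rfl (by simpa using hvj)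
    simp only [hΦ, PhiCNF, Finset.mem_union]
    right
    simp only [clE, Finset.mem_image]
    exact ⟨(j, ℓ), by simp [hj], rfl⟩
  have hel0 : ∀ x y, (x, y) ∈ I.E → ∀ b ∈ g y, ∀ i ∈ Finset.Icc 1 d,
      PV.el x y b i ∈ cl := by
    intro x y hxy b hb i hi
    obtain ⟨a, _, hab⟩ := hcov (x, y) hxy b hb
    refine fc_closed Φ _ ⟨{PV.el x y b i},
      {PV.u (Sum.inl (x, a)), PV.u (Sum.inr (y, b))}⟩ ?_ _ rfl ?_
    · simp only [hΦ, PhiCNF, PsiCNF, Finset.mem_union]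
      left; left; left; left
      simp only [clA, Finset.mem_biUnion, Finset.mem_image]
      exact ⟨((x, y), i), by simp [hxy, hi], (a, b), hab, rfl⟩
    · intro w hw
      simp only [Finset.coe_insert, Finset.coe_singleton, Set.mem_insert_iff,
        Set.mem_singleton_iff] at hw
      rcases hw with rfl | rfl
      · exact hu _
      · exact hu _
  have he : ∀ x y, (x, y) ∈ I.E → ∀ i ∈ Finset.Icc 1 d, PV.e x y i ∈ cl := by
    intro x y hxy i hi
    obtain ⟨b, hb⟩ := hg y
    refine fc_closed Φ _ ⟨{PV.e x y i}, (Nbr I y).image fun z => PV.el z y b i⟩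
      ?_ _ rfl ?_
    · simp only [hΦ, PhiCNF, PsiCNF, Finset.mem_union]
      left; left; left; right
      simp only [clB, Finset.mem_image]
      exact ⟨(((x, y), b), i), by simp [hxy, hi], rfl⟩
    · intro w hw
      simp only [Finset.coe_image, Set.mem_image, Finset.mem_coe] at hw
      obtain ⟨z, hz, rfl⟩ := hw
      have hzE : (z, y) ∈ I.E := by
        simpa [Nbr] using hz
      exact hel0 z y hzE b hb i hi
  have hel : ∀ x y, (x, y) ∈ I.E → ∀ b : B, ∀ i ∈ Finset.Icc 1 d,
      PV.el x y b i ∈ cl := by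
    intro x y hxy b i hi
    refine fc_closed Φ _ ⟨{PV.el x y b i}, {PV.e x y i}⟩ ?_ _ rfl ?_
    · simp only [hΦ, PhiCNF, PsiCNF, Finset.mem_union]
      left; left; right
      simp only [clC, Finset.mem_image]
      exact ⟨(((x, y), b), i), by simp [hxy, hi], rfl⟩
    · simpa using he x y hxy i hi
  intro C hC z hz
  simp only [hΦ, PhiCNF, PsiCNF, Finset.mem_union] at hC
  rcases hC with ((((hC | hC) | hC) | hC) | hC)
  · simp only [clA, Finset.mem_biUnion, Finset.mem_image, Finset.mem_product] at hC
    obtain ⟨p, hp, ab, hab, rfl⟩ := hC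
    simp only [Finset.mem_singleton] at hz
    subst hz
    exact hel _ _ hp.1 _ _ hp.2
  · simp only [clB, Finset.mem_image, Finset.mem_product] at hC
    obtain ⟨p, hp, rfl⟩ := hC
    simp only [Finset.mem_singleton] at hz
    subst hz
    exact he _ _ hp.1.1 _ hp.2
  · simp only [clC, Finset.mem_image, Finset.mem_product] at hC
    obtain ⟨p, hp, rfl⟩ := hC
    simp only [Finset.mem_singleton] at hz
    subst hz
    exact hel _ _ hp.1.1 _ _ hp.2
  · simp only [clD, Finset.mem_image] at hC
    obtain ⟨ℓ, _, rfl⟩ := hC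
    simp only [Finset.mem_singleton] at hz
    subst hz
    exact hu _
  · simp only [clE, Finset.mem_image] at hC
    obtain ⟨p, _, rfl⟩ := hC
    simp only [Finset.mem_singleton] at hz
    subst hz
    exact hu _

end CanonAux

/-- In the canonical construction (for a feasible Label Cover
instance), for every `j ∈ [t]` the variable `v(j)` is never the head of a (pure
Horn) implicate of `h`, and every prime implicate of `h` whose variable set contains
`v(j)` is quadratic, of the form `v(j) → z` for some variable `z` of `h` other
than `v(j)`. -/
theorem vj_prime_implicates_quadratic
    {X Y A B : Type*} [Fintype X] [Fintype Y] [Fintype A] [Fintype B]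
    [DecidableEq X] [DecidableEq Y] [DecidableEq A] [DecidableEq B]
    [Nonempty X] [Nonempty Y]
    (I : LabelCover X Y A B) (d t : ℕ) (hd : 1 ≤ d) (ht : 1 ≤ t)
    (hnoIsoX : ∀ x : X, ∃ y, (x, y) ∈ I.E)
    (hnoIsoY : ∀ y : Y, ∃ x, (x, y) ∈ I.E)
    (hfeas : ∃ f g, I.IsTotalCover f g) :
    ∀ j ∈ Finset.Icc 1 t,
      (∀ C : Clause (PV X Y A B), C.IsClause → C.IsPureHorn →
        Implicate (hFun I d t) C → PV.v j ∉ C.pos) ∧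
      (∀ C : Clause (PV X Y A B), PrimeImplicate (hFun I d t) C →
        PV.v j ∈ C.pos ∪ C.neg →
        ∃ z ∈ varsOf (PhiCNF I d t), z ≠ PV.v j ∧
          C = ⟨{z}, {PV.v j}⟩) := by
  intro j hj
  have hPH : ∀ C ∈ PhiCNF I d t, ∃ v, C.pos = {v} := fun C hC =>
    (phi_pos I d t C hC).imp fun w hw => hw.1
  have part1 : ∀ C : Clause (PV X Y A B), C.IsClause → C.IsPureHorn →
      Implicate (hFun I d t) C → PV.v j ∉ C.pos := by
    rintro C hcl ⟨w, hw⟩ himp hmem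
    rw [hw, Finset.mem_singleton] at hmem
    subst hmem
    set a : PV X Y A B → Bool := fun x => if x = PV.v j then false else true with ha
    have hha : hFun I d t a := by
      intro D hD
      obtain ⟨w', hw', hne⟩ := phi_pos I d t D hD
      exact Or.inl ⟨w', by simp [hw'], by simp [ha, hne j]⟩
    refine himp a ?_ hha
    simp only [Clause.eval, not_or, not_exists, not_and]
    constructor
    · intro x hx
      rw [hw, Finset.mem_singleton] at hx
      subst hx
      simp [ha]
    · intro x hx
      have hxne : x ≠ PV.v j := by
        rintro rfl
        exact Finset.disjoint_left.mp hcl (by rw [hw]; exact Finset.mem_singleton_self _) hx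
      simp [ha, hxne]
  refine ⟨part1, ?_⟩
  intro C hprime hmem
  obtain ⟨z, hz⟩ := prime_pos_singleton (PhiCNF I d t) hPH C hprime
  have hzpos : z ∈ C.pos := by rw [hz]; exact Finset.mem_singleton_self z
  have hvp : PV.v j ∉ C.pos := part1 C hprime.1 ⟨z, hz⟩ hprime.2.1
  have hneg : PV.v j ∈ C.neg := (Finset.mem_union.1 hmem).resolve_left hvp
  have hzne : z ≠ PV.v j := by rintro rfl; exact hvp hzpos
  have himpz : Implicate (fun a => evalCNF (PhiCNF I d t) a) ⟨{z}, C.neg⟩ := by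
    rw [← hz]
    exact hprime.2.1
  have hzcl : z ∈ fcClosure (PhiCNF I d t) ↑C.neg :=
    mem_of_implicate (PhiCNF I d t) C.neg z hPH himpz
  rcases mem_closure_cases (PhiCNF I d t) _ z hzcl with hzS | ⟨C₀, hC₀, hz0⟩
  · exact absurd hzS (by simpa using Finset.disjoint_left.mp hprime.1 hzpos)
  have hzvars : z ∈ varsOf (PhiCNF I d t) :=
    Finset.mem_biUnion.2 ⟨C₀, hC₀, Finset.mem_union_left _ hz0⟩
  have hzclvj : z ∈ fcClosure (PhiCNF I d t) {PV.v j} :=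
    head_mem_closure I d t hfeas hj C₀ hC₀ z hz0
  have hNeq : C.neg = {PV.v j} := by
    refine Finset.eq_singleton_iff_unique_mem.2 ⟨hneg, ?_⟩
    intro w hw
    by_contra hwne
    have hvj' : PV.v j ∈ C.neg.erase w :=
      Finset.mem_erase.2 ⟨fun h => hwne (h.symm), hneg⟩
    have himp2 : Implicate (fun a => evalCNF (PhiCNF I d t) a) ⟨{z}, C.neg.erase w⟩ :=
      implicate_of_mem _ _ z (fc_mono _ (by simpa [and_comm] using hvj') hzclvj)
    rw [← hz] at himp2
    exact hprime.2.2.2 w hw himp2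
  exact ⟨z, hzvars, hzne, by rw [← hz, ← hNeq]⟩
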